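/- Under the change-aware policy, the closed-form stationary distribution of the joint (source state, Version Innovation Age) chain is a probability distribution with ∑_{i≥0} (σ₀(i) + σ₁(i)) = 1, and the average Version Innovation Age equals ∑_{i≥1} i·(σ₀(i) + σ₁(i)) = (1 − p_s)/p_s. -/

import Mathlib

/-- Under the change-aware policy, the stationary distribution of the joint
(source state, Version Innovation Age) chain is a probability distribution and the
average Version Innovation Age equals (1 − p_s)/p_s. -/
theorem via_change_aware (p q ps : ℝ)
    (hp : 0 < p) (hp1 : p < 1) (hq : 0 < q) (hq1 : q < 1)
    (hps : 0 < ps) (hps1 : ps ≤ 1)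
    (σ₀ σ₁ : ℕ → ℝ)
    (hσ₀ : ∀ i, σ₀ i = q * ps * (1 - ps) ^ i / (p + q))
    (hσ₁ : ∀ i, σ₁ i = p * ps * (1 - ps) ^ i / (p + q)) :
    Summable (fun i : ℕ => σ₀ i + σ₁ i) ∧
    ∑' i : ℕ, (σ₀ i + σ₁ i) = 1 ∧
    Summable (fun i : ℕ => (i : ℝ) * (σ₀ i + σ₁ i)) ∧
    ∑' i : ℕ, (i : ℝ) * (σ₀ i + σ₁ i) = (1 - ps) / ps := by
  have hpq : p + q ≠ 0 := by positivity
  have hsum : ∀ i, σ₀ i + σ₁ i = ps * (1 - ps) ^ i := by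
    intro i
    rw [hσ₀, hσ₁]
    field_simp
    ring
  have hmul : ∀ i : ℕ, (i : ℝ) * (σ₀ i + σ₁ i) = ps * ((i : ℝ) * (1 - ps) ^ i) := by
    intro i; rw [hsum i]; ring
  have hr : ‖(1 - ps)‖ < 1 := by
    rw [Real.norm_eq_abs, abs_lt]; constructor <;> linarith
  have hr' : 0 ≤ 1 - ps := by linarith
  have hr1 : 1 - ps < 1 := by linarith
  have hgeo : Summable (fun i : ℕ => (1 - ps) ^ i) := summable_geometric_of_lt_one hr' hr1
  have hng : Summable (fun i : ℕ => (i : ℝ) * (1 - ps) ^ i) :=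
    (hasSum_coe_mul_geometric_of_norm_lt_one hr).summable
  refine ⟨?_, ?_, ?_, ?_⟩
  · simpa [hsum] using hgeo.mul_left ps
  · calc ∑' i : ℕ, (σ₀ i + σ₁ i) = ∑' i : ℕ, ps * (1 - ps) ^ i := by
          exact tsum_congr hsum
      _ = ps * (1 / (1 - (1 - ps))) := by
          rw [tsum_mul_left, tsum_geometric_of_lt_one hr' hr1, one_div]
      _ = 1 := by field_simp; rw [sub_sub_cancel]; exact div_self hps.ne'
  · simpa [hmul] using hng.mul_left ps
  · calc ∑' i : ℕ, (i : ℝ) * (σ₀ i + σ₁ i)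
        = ∑' i : ℕ, ps * ((i : ℝ) * (1 - ps) ^ i) := tsum_congr hmul
      _ = ps * ((1 - ps) / (1 - (1 - ps)) ^ 2) := by
          rw [tsum_mul_left, tsum_coe_mul_geometric_of_norm_lt_one hr]
      _ = (1 - ps) / ps := by
          have : (1 - (1 - ps)) = ps := by ring
          rw [this]; field_simp
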